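/- Let η be a prime binary word of length k ≥ 1. Then lim_{n→∞} Σ(η^n)/n³ = k²/3, where Σ(w) = Σ_{ξ∈{0,1}^+} |w|_ξ². -/

import Mathlib

open Filter

def occ (w ξ : List Bool) : ℕ :=
  ((List.range w.length).filter (fun i => ξ.isPrefixOf (w.drop i))).length

def wpow (η : List Bool) (ℓ : ℕ) : List Bool := (List.replicate ℓ η).flatten

def kxSum (w : List Bool) : ℕ :=
  ∑ ξ ∈ w.sublists.toFinset.filter (fun ξ => ξ ≠ []), (occ w ξ) ^ 2

noncomputable def Lam (w : List Bool) : ℕ :=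
  sSup {m | ∃ η ℓ, η ≠ ([] : List Bool) ∧ 1 ≤ ℓ ∧ wpow η ℓ <:+: w ∧
    m = η.length ^ 2 * (ℓ + 1) ^ 3}

def IsPrimeWord (η : List Bool) : Prop :=
  η ≠ [] ∧ ∀ ζ ℓ, 2 ≤ ℓ → η ≠ wpow ζ ℓ

def occEnd (v ξ : List Bool) (m : ℕ) : ℕ :=
  ((List.range v.length).filter
    (fun i => ξ.isPrefixOf (v.drop i) && decide (v.length < i + ξ.length + m))).length

def pref (x : ℕ → Bool) (n : ℕ) : List Bool := (List.range n).map x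

namespace KXProof

/-! ### Common prefix length -/

def cpl : List Bool → List Bool → ℕ
  | a :: s, b :: t => if a = b then cpl s t + 1 else 0
  | _, _ => 0

lemma cpl_nil_left (v : List Bool) : cpl [] v = 0 := by cases v <;> rfl
lemma cpl_nil_right (u : List Bool) : cpl u [] = 0 := by cases u <;> rfl

lemma cpl_le_left : ∀ u v : List Bool, cpl u v ≤ u.length
  | [], v => by simp [cpl_nil_left]
  | a :: s, [] => by simp [cpl_nil_right]
  | a :: s, b :: t => by
    by_cases h : a = b <;> simp [cpl, h]
    exact cpl_le_left s t

lemma cpl_comm : ∀ u v : List Bool, cpl u v = cpl v u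
  | [], v => by simp [cpl_nil_left, cpl_nil_right]
  | a :: s, [] => by simp [cpl_nil_left, cpl_nil_right]
  | a :: s, b :: t => by
    by_cases h : a = b
    · simp [cpl, h, cpl_comm s t]
    · have h' : ¬ b = a := fun hh => h hh.symm
      simp [cpl, h, h']

lemma cpl_le_right (u v : List Bool) : cpl u v ≤ v.length := cpl_comm u v ▸ cpl_le_left v u

lemma take_cpl_prefix_right : ∀ (u v : List Bool) (m : ℕ), m ≤ cpl u v → u.take m <+: v
  | u, v, 0, _ => by simp
  | [], v, m + 1, h => by simp [cpl_nil_left] at h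
  | a :: s, [], m + 1, h => by simp [cpl_nil_right] at h
  | a :: s, b :: t, m + 1, h => by
    by_cases hab : a = b
    · simp only [cpl, if_pos hab] at h
      subst hab
      simpa [List.take_succ_cons, List.prefix_cons_inj] using
        take_cpl_prefix_right s t m (by omega)
    · simp [cpl, hab] at h

lemma le_cpl_of_prefix : ∀ (ξ u v : List Bool), ξ <+: u → ξ <+: v → ξ.length ≤ cpl u v
  | [], u, v, _, _ => by simp
  | c :: ρ, [], v, h, _ => by simp at h
  | c :: ρ, u, [], _, h => by simp at h
  | c :: ρ, a :: s, b :: t, h1, h2 => by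
    obtain ⟨rfl, h1'⟩ := List.cons_prefix_cons.mp h1
    obtain ⟨rfl, h2'⟩ := List.cons_prefix_cons.mp h2
    simpa [cpl] using le_cpl_of_prefix ρ s t h1' h2'

lemma cpl_eq_of_prefix : ∀ {u v : List Bool}, v <+: u → cpl u v = v.length := by
  intro u v h
  exact le_antisymm (cpl_le_right u v) (le_cpl_of_prefix v u v h (List.prefix_refl v))

lemma cpl_getElem {u v : List Bool} {t : ℕ} (ht : t < cpl u v) :
    ∃ (h1 : t < u.length) (h2 : t < v.length), u[t] = v[t] := by
  have h1 : t < u.length := lt_of_lt_of_le ht (cpl_le_left u v)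
  have h2 : t < v.length := lt_of_lt_of_le ht (cpl_le_right u v)
  refine ⟨h1, h2, ?_⟩
  have hpre : u.take (cpl u v) <+: v := take_cpl_prefix_right u v _ le_rfl
  have htl : t < (u.take (cpl u v)).length := by
    simpa [List.length_take] using lt_of_lt_of_le ht (le_min le_rfl (cpl_le_left u v))
  have := hpre.getElem htl
  rwa [List.getElem_take] at this

/-! ### Powers as maps of periodic functions -/

lemma wpow_length (η : List Bool) (n : ℕ) : (wpow η n).length = η.length * n := by
  simp [wpow, List.length_flatten, List.map_replicate, Nat.mul_comm]

lemma range_map_getD (l : List Bool) : (List.range l.length).map (fun t => l.getD t false) = l := by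
  apply List.ext_getElem
  · simp
  · intro n h1 h2
    simp [List.getD_eq_getElem?_getD, List.getElem?_eq_getElem h2]

def X (η : List Bool) (t : ℕ) : Bool := η.getD (t % η.length) false

lemma X_congr (η : List Bool) {a b : ℕ} (h : a ≡ b [MOD η.length]) : X η a = X η b := by
  unfold X; rw [h]

lemma X_period (η : List Bool) (t : ℕ) : X η (t + η.length) = X η t :=
  X_congr η (by simp [Nat.ModEq, Nat.add_mod_right])

lemma wpow_eq_map (η : List Bool) (n : ℕ) :
    wpow η n = (List.range (η.length * n)).map (X η) := by
  induction n with
  | zero => simp [wpow]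
  | succ n ih =>
    have h1 : wpow η (n + 1) = wpow η n ++ η := by
      rw [wpow, List.replicate_succ', List.flatten_append]; simp [wpow]
    rw [h1, ih, Nat.mul_succ, List.range_add, List.map_append, List.map_map]
    congr 1
    calc η = (List.range η.length).map (fun t => η.getD t false) := (range_map_getD η).symm
      _ = _ := by
        apply List.map_congr_left
        intro t ht
        simp only [Function.comp, X]
        rw [Nat.mul_comm, Nat.add_comm, Nat.add_mul_mod_self_right,
          Nat.mod_eq_of_lt (List.mem_range.mp ht)]

/-! ### Periods -/

lemma period_iterate {f : ℕ → Bool} {p : ℕ} (hp : ∀ t, f (t + p) = f t) :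
    ∀ (c t : ℕ), f (t + c * p) = f t := by
  intro c
  induction c with
  | zero => simp
  | succ c ih => intro t; rw [Nat.succ_mul, ← Nat.add_assoc, hp, ih]

lemma period_gcd {f : ℕ → Bool} {p q : ℕ} (hp : ∀ t, f (t + p) = f t)
    (hq : ∀ t, f (t + q) = f t) : ∀ t, f (t + Nat.gcd p q) = f t := by
  rcases Nat.eq_zero_or_pos p with rfl | hp0
  · simpa using hq
  rcases Nat.eq_zero_or_pos q with rfl | hq0
  · simpa using hp
  set g := Nat.gcd p q with hg
  have hgp : g ∣ p := Nat.gcd_dvd_left p q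
  have hgq : g ∣ q := Nat.gcd_dvd_right p q
  obtain ⟨p₀, hp₀⟩ := hgp
  obtain ⟨q₀, hq₀⟩ := hgq
  have hg0 : 0 < g := Nat.gcd_pos_of_pos_left q hp0
  have hco : Nat.Coprime q₀ p₀ := by
    have := Nat.coprime_div_gcd_div_gcd (m := p) (n := q) hg0
    have e1 : p / g = p₀ := by rw [hp₀]; exact Nat.mul_div_cancel_left p₀ hg0
    have e2 : q / g = q₀ := by rw [hq₀]; exact Nat.mul_div_cancel_left q₀ hg0
    rw [e1, e2] at this
    exact this.symm
  rcases Nat.lt_or_ge 1 p₀ with hp₁ | hp₁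
  · obtain ⟨a, -, ha⟩ := Nat.exists_mul_mod_eq_one_of_coprime hco hp₁
    have hdm : q₀ * a = p₀ * (q₀ * a / p₀) + 1 := by
      conv_lhs => rw [← Nat.div_add_mod (q₀ * a) p₀, ha]
    set m := q₀ * a / p₀
    intro t
    have h1 : f (t + g + m * p) = f (t + g) := period_iterate hp m _
    have h2 : f (t + a * q) = f t := period_iterate hq a _
    have key : t + g + m * p = t + a * q := by
      rw [hq₀, hp₀]
      have e : a * (g * q₀) = g * (q₀ * a) := by ring
      rw [e, hdm]
      ring
    rw [← h1, key, h2]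
  · have hp₀1 : p₀ = 1 := by
      rcases Nat.eq_zero_or_pos p₀ with rfl | h
      · simp at hp₀; omega
      · omega
    have : g = p := by rw [hp₀, hp₀1, Nat.mul_one]
    rw [this]; exact hp

lemma X_mod (η : List Bool) (t : ℕ) : X η t = X η (t % η.length) :=
  X_congr η (Nat.mod_mod_of_dvd t dvd_rfl).symm

lemma prime_no_period (η : List Bool) (hη : IsPrimeWord η) {d : ℕ} (hd : 0 < d)
    (hdk : d < η.length) (hper : ∀ t, X η (t + d) = X η t) : False := by
  set k := η.length with hk
  set g := Nat.gcd k d with hg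
  have hgd : g ∣ d := Nat.gcd_dvd_right k d
  have hgk : g ∣ k := Nat.gcd_dvd_left k d
  have hg0 : 0 < g := Nat.gcd_pos_of_pos_right k hd
  have hgltk : g < k := lt_of_le_of_lt (Nat.le_of_dvd hd hgd) hdk
  have hXg : ∀ t, X η (t + g) = X η t := period_gcd (X_period η) hper
  -- X has period g everywhere, hence X t = X (t % g)
  have hXmodg : ∀ t, X η t = X η (t % g) := by
    intro t
    conv_lhs => rw [← Nat.div_add_mod t g]
    rw [Nat.add_comm, Nat.mul_comm]
    exact period_iterate hXg (t / g) (t % g)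
  set ℓ := k / g with hℓ
  have hkgℓ : g * ℓ = k := Nat.mul_div_cancel' hgk
  have hℓ2 : 2 ≤ ℓ := by
    rcases hgk with ⟨c, hc⟩
    have : ℓ = c := by rw [hℓ, hc, Nat.mul_div_cancel_left c hg0]
    subst this
    by_contra hcon
    interval_cases ℓ <;> omega
  have htg : (η.take g).length = g := by
    rw [List.length_take]; omega
  have heq : η = wpow (η.take g) ℓ := by
    rw [wpow_eq_map, htg, hkgℓ]
    calc η = (List.range k).map (X η) := by
          conv_lhs => rw [← range_map_getD η]
          apply List.map_congr_left
          intro t ht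
          unfold X
          rw [Nat.mod_eq_of_lt (List.mem_range.mp ht)]
      _ = (List.range k).map (X (η.take g)) := by
          apply List.map_congr_left
          intro t ht
          rw [hXmodg t]
          unfold X
          rw [htg]
          have h1 : t % g % k = t % g := Nat.mod_eq_of_lt (lt_trans (Nat.mod_lt t hg0) hgltk)
          rw [h1]
          have h3 : t % g < g := Nat.mod_lt t hg0
          rw [List.getD_eq_getElem _ _ (by omega : t % g < k),
            List.getD_eq_getElem _ _ (by rw [htg]; exact h3), List.getElem_take]
  exact hη.2 (η.take g) ℓ hℓ2 heq

lemma drop_wpow (η : List Bool) (n i : ℕ) (hi : i ≤ η.length * n) :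
    (wpow η n).drop i = (List.range (η.length * n - i)).map (fun t => X η (i + t)) := by
  rw [wpow_eq_map, ← List.map_drop]
  have h : List.range (η.length * n) =
      List.range i ++ (List.range (η.length * n - i)).map (fun t => i + t) := by
    rw [← List.range_add]; congr 1; omega
  have h2 := @List.drop_left _ (List.range i) ((List.range (η.length * n - i)).map (fun t => i + t))
  rw [List.length_range] at h2
  rw [h, h2, List.map_map]
  rfl

lemma cpl_drop_congruent (η : List Bool) (n : ℕ) {i j : ℕ} (hij : i ≤ j)
    (hj : j ≤ η.length * n) (hdvd : η.length ∣ (j - i)) :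
    cpl ((wpow η n).drop i) ((wpow η n).drop j) = η.length * n - j := by
  have hpre : (wpow η n).drop j <+: (wpow η n).drop i := by
    rw [drop_wpow η n j hj, drop_wpow η n i (le_trans hij hj), List.prefix_iff_eq_take,
      List.length_map, List.length_range, ← List.map_take, List.take_range]
    have hmin : (η.length * n - j) ⊓ (η.length * n - i) = η.length * n - j := by omega
    rw [hmin]
    apply List.map_congr_left
    intro t _
    apply X_congr
    have : j + t - (i + t) = j - i := by omega
    exact ((Nat.modEq_iff_dvd' (by omega)).mpr (by rwa [this])).symm
  rw [cpl_eq_of_prefix hpre, List.length_drop, wpow_length]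

lemma noncong_aux (η : List Bool) (hη : IsPrimeWord η) {i j : ℕ} (hij : i ≤ j)
    (hk : 0 < η.length) (hne : ¬ η.length ∣ (j - i))
    (hloc : ∀ t, t < η.length → X η (i + t) = X η (j + t)) : False := by
  set k := η.length with hkdef
  set d := j - i with hd
  set d' := d % k with hd'
  have hd'0 : 0 < d' := by
    rcases Nat.eq_zero_or_pos d' with h | h
    · exact absurd (Nat.dvd_iff_mod_eq_zero.mpr h) hne
    · exact h
  have hd'k : d' < k := Nat.mod_lt _ hk
  have hper : ∀ r, X η (r + d') = X η r := by
    intro r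
    set s := (r + (k - i % k)) % k with hs
    have hsk : s < k := Nat.mod_lt _ hk
    have hcong : i + s ≡ r [MOD k] := by
      have h1 : s ≡ r + (k - i % k) [MOD k] := Nat.mod_modEq _ _
      have h2 : i + s ≡ i + (r + (k - i % k)) [MOD k] := h1.add_left i
      have hdm := Nat.div_add_mod i k
      have him : i % k < k := Nat.mod_lt _ hk
      have h3 : i + (r + (k - i % k)) = r + (i / k + 1) * k := by
        have : (i / k + 1) * k = k * (i / k) + k := by ring
        omega
      have h4 : r + (i / k + 1) * k ≡ r [MOD k] := by
        show (r + (i / k + 1) * k) % k = r % k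
        exact Nat.add_mul_mod_self_right r (i / k + 1) k
      exact h2.trans (h3 ▸ h4)
    calc X η (r + d') = X η (i + s + d') := X_congr η (hcong.add_right d').symm
      _ = X η (i + s + d) := X_congr η ((Nat.mod_modEq d k).add_left _)
      _ = X η (j + s) := by congr 1; omega
      _ = X η (i + s) := (hloc s hsk).symm
      _ = X η r := X_congr η hcong
  exact prime_no_period η hη hd'0 hd'k hper

lemma cpl_drop_noncong (η : List Bool) (hη : IsPrimeWord η) (n : ℕ) {i j : ℕ}
    (hi : i ≤ η.length * n) (hj : j ≤ η.length * n) (hne : ¬ i ≡ j [MOD η.length]) :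
    cpl ((wpow η n).drop i) ((wpow η n).drop j) < η.length := by
  have hk : 0 < η.length := List.length_pos_iff.mpr hη.1
  by_contra hcon
  push_neg at hcon
  -- local equality at all t < k, in both orders
  have key : ∀ (a b : ℕ), a ≤ η.length * n → b ≤ η.length * n →
      η.length ≤ cpl ((wpow η n).drop a) ((wpow η n).drop b) →
      ∀ t, t < η.length → X η (a + t) = X η (b + t) := by
    intro a b ha hb hab t ht
    obtain ⟨h1, h2, he⟩ := cpl_getElem (lt_of_lt_of_le ht hab)
    rw [List.getElem_of_eq (drop_wpow η n a ha) h1, List.getElem_map, List.getElem_range] at he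
    rw [List.getElem_of_eq (drop_wpow η n b hb) h2, List.getElem_map, List.getElem_range] at he
    exact he
  rcases le_total i j with hij | hij
  · have hdvd : ¬ η.length ∣ (j - i) := fun h => hne ((Nat.modEq_iff_dvd' hij).mpr h)
    exact noncong_aux η hη hij hk hdvd (key i j hi hj hcon)
  · have hdvd : ¬ η.length ∣ (i - j) := fun h => hne ((Nat.modEq_iff_dvd' hij).mpr h).symm
    rw [cpl_comm] at hcon
    exact noncong_aux η hη hij hk hdvd (key j i hj hi hcon)

lemma occ_eq (w ξ : List Bool) :
    occ w ξ = ((Finset.range w.length).filter (fun i => ξ <+: w.drop i)).card := by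
  have h : ∀ i, ξ.isPrefixOf (w.drop i) = decide (ξ <+: w.drop i) := by
    intro i
    rw [Bool.eq_iff_iff]
    simp [List.isPrefixOf_iff_prefix]
  simp only [occ, h]
  simp [Finset.filter, Finset.range, Multiset.range, Multiset.filter_coe]

lemma filter_prefix_card (w : List Bool) (i j : ℕ) :
    ((w.sublists.toFinset.filter (fun ξ => ξ ≠ [])).filter
        (fun ξ => ξ <+: w.drop i ∧ ξ <+: w.drop j)).card = cpl (w.drop i) (w.drop j) := by
  set u := w.drop i with hu
  set v := w.drop j with hv
  set L := cpl u v with hL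
  have hLu : L ≤ u.length := cpl_le_left u v
  have himg : (w.sublists.toFinset.filter (fun ξ => ξ ≠ [])).filter
      (fun ξ => ξ <+: u ∧ ξ <+: v) = (Finset.Icc 1 L).image (fun m => u.take m) := by
    ext ξ
    simp only [Finset.mem_filter, Finset.mem_image, Finset.mem_Icc, List.mem_toFinset,
      List.mem_sublists]
    constructor
    · rintro ⟨⟨hsub, hne⟩, h1, h2⟩
      refine ⟨ξ.length, ⟨by simpa [Nat.one_le_iff_ne_zero] using hne,
        le_cpl_of_prefix ξ u v h1 h2⟩, (List.prefix_iff_eq_take.mp h1).symm⟩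
    · rintro ⟨m, ⟨hm1, hm2⟩, rfl⟩
      have hmu : m ≤ u.length := le_trans hm2 hLu
      refine ⟨⟨?_, ?_⟩, List.take_prefix m u, take_cpl_prefix_right u v m hm2⟩
      · exact (((List.take_prefix m u).isInfix.trans
          (List.drop_suffix i w).isInfix)).sublist
      · have : (u.take m).length = m := by simp [List.length_take]; omega
        intro hnil
        rw [hnil] at this
        simp at this
        omega
  rw [himg, Finset.card_image_of_injOn, Nat.card_Icc]
  · omega
  · intro a ha b hb hab
    simp only [Finset.coe_Icc, Set.mem_Icc] at ha hb
    have ha' : (u.take a).length = a := by simp [List.length_take]; omega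
    have hb' : (u.take b).length = b := by simp [List.length_take]; omega
    rw [← ha', ← hb']
    exact congrArg List.length hab

lemma kxSum_eq_sum_cpl (w : List Bool) :
    kxSum w = ∑ i ∈ Finset.range w.length, ∑ j ∈ Finset.range w.length,
      cpl (w.drop i) (w.drop j) := by
  rw [kxSum]
  have step1 : ∀ ξ, occ w ξ ^ 2 = ∑ i ∈ Finset.range w.length, ∑ j ∈ Finset.range w.length,
      (if ξ <+: w.drop i ∧ ξ <+: w.drop j then 1 else 0) := by
    intro ξ
    rw [occ_eq, sq, Finset.card_filter, Finset.sum_mul_sum]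
    congr 1; funext i; congr 1; funext j
    by_cases h1 : ξ <+: w.drop i <;> by_cases h2 : ξ <+: w.drop j <;> simp [h1, h2]
  calc ∑ ξ ∈ w.sublists.toFinset.filter (fun ξ => ξ ≠ []), occ w ξ ^ 2
      = ∑ ξ ∈ w.sublists.toFinset.filter (fun ξ => ξ ≠ []),
          ∑ i ∈ Finset.range w.length, ∑ j ∈ Finset.range w.length,
            (if ξ <+: w.drop i ∧ ξ <+: w.drop j then 1 else 0) := by
        exact Finset.sum_congr rfl fun ξ _ => step1 ξ
    _ = ∑ i ∈ Finset.range w.length, ∑ j ∈ Finset.range w.length,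
          ∑ ξ ∈ w.sublists.toFinset.filter (fun ξ => ξ ≠ []),
            (if ξ <+: w.drop i ∧ ξ <+: w.drop j then 1 else 0) := by
        rw [Finset.sum_comm]
        exact Finset.sum_congr rfl fun i _ => Finset.sum_comm
    _ = _ := by
        apply Finset.sum_congr rfl; intro i _
        apply Finset.sum_congr rfl; intro j _
        rw [← Finset.card_filter, filter_prefix_card]


lemma max_affine (k a b r : ℕ) : max (a*k+r) (b*k+r) = k * max a b + r := by
  rcases le_total a b with h|h
  · have h1 : a*k + r ≤ b*k + r := by have := Nat.mul_le_mul_right k h; omega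
    rw [Nat.max_eq_right h1, Nat.max_eq_right h, Nat.mul_comm]
  · have h1 : b*k + r ≤ a*k + r := by have := Nat.mul_le_mul_right k h; omega
    rw [Nat.max_eq_left h1, Nat.max_eq_left h, Nat.mul_comm]

def Mx (n : ℕ) : ℕ := ∑ a ∈ Finset.range n, ∑ b ∈ Finset.range n, max a b

lemma Mx_succ (n : ℕ) : Mx (n+1) = Mx n + 2*n^2 + n := by
  rw [Mx, Mx]
  rw [Finset.sum_range_succ]
  have h1 : ∀ a ∈ Finset.range n, ∑ b ∈ Finset.range (n+1), max a b
      = (∑ b ∈ Finset.range n, max a b) + a ⊔ n := fun a _ => Finset.sum_range_succ _ n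
  rw [Finset.sum_congr rfl h1, Finset.sum_add_distrib, Finset.sum_range_succ]
  have h2 : ∀ a ∈ Finset.range n, a ⊔ n = n := by
    intro a ha; exact Nat.max_eq_right (le_of_lt (Finset.mem_range.mp ha))
  have h3 : ∀ b ∈ Finset.range n, n ⊔ b = n := by
    intro b hb; exact Nat.max_eq_left (le_of_lt (Finset.mem_range.mp hb))
  rw [Finset.sum_congr rfl h2, Finset.sum_congr rfl h3]
  simp [Finset.sum_const]
  ring

lemma Mx_formula (n : ℕ) : 6 * Mx n + n*(n+1)*(2*n+1) = 6*n^3 := by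
  induction n with
  | zero => simp [Mx]
  | succ n ih => rw [Mx_succ]; ring_nf; ring_nf at ih; omega

lemma sum_range_mul_eq (k n : ℕ) (hk : 0 < k) (f : ℕ → ℕ) :
    ∑ i ∈ Finset.range (k*n), f i
      = ∑ a ∈ Finset.range n, ∑ r ∈ Finset.range k, f (a*k+r) := by
  rw [← Finset.sum_product']
  apply Finset.sum_nbij' (i := fun i => (i / k, i % k)) (j := fun p => p.1 * k + p.2)
  · intro i hi
    simp only [Finset.mem_product, Finset.mem_range] at *
    constructor
    · exact Nat.div_lt_of_lt_mul (by omega)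
    · exact Nat.mod_lt _ hk
  · intro p hp
    simp only [Finset.mem_product, Finset.mem_range] at *
    obtain ⟨h1, h2⟩ := hp
    calc p.1 * k + p.2 < p.1 * k + k := by omega
      _ ≤ n * k := by
          have : p.1 + 1 ≤ n := h1
          calc p.1 * k + k = (p.1 + 1) * k := by ring
            _ ≤ n * k := Nat.mul_le_mul_right k this
      _ = k * n := Nat.mul_comm n k
  · intro i _
    exact Nat.div_add_mod' i k
  · intro p hp
    simp only [Finset.mem_product, Finset.mem_range] at hp
    have h1 : (p.1 * k + p.2) / k = p.1 := by
      rw [Nat.add_comm, Nat.add_mul_div_right _ _ hk, Nat.div_eq_of_lt hp.2, Nat.zero_add]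
    have h2 : (p.1 * k + p.2) % k = p.2 := by
      rw [Nat.add_comm, Nat.add_mul_mod_self_right, Nat.mod_eq_of_lt hp.2]
    simp [h1, h2]
  · intro i _
    simp only []
    rw [Nat.div_add_mod' i k]

lemma F_real (k n : ℕ) (hk : 0 < k) :
    ((∑ a ∈ Finset.range n, ∑ r ∈ Finset.range k, ∑ b ∈ Finset.range n,
        (k*n - (k * max a b + r)) : ℕ) : ℝ)
      = (k:ℝ)^2 * ((n:ℝ)*(n+1)*(2*n+1))/6 - (k:ℝ)*((k:ℝ)-1)*(n:ℝ)^2/2 := by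
  have hR : (∑ r ∈ Finset.range k, (r:ℝ)) = (k:ℝ)*((k:ℝ)-1)/2 := by
    have h1 := Finset.sum_range_id_mul_two k
    have h2 := congrArg (Nat.cast : ℕ → ℝ) h1
    push_cast [Nat.cast_sub (by omega : 1 ≤ k)] at h2
    linarith
  have hM : ((Mx n : ℕ) : ℝ) = (n:ℝ)^3 - (n:ℝ)*((n:ℝ)+1)*(2*(n:ℝ)+1)/6 := by
    have h2 := congrArg (Nat.cast : ℕ → ℝ) (Mx_formula n)
    push_cast at h2
    linarith
  have hcast : ∀ a ∈ Finset.range n, ∀ r ∈ Finset.range k, ∀ b ∈ Finset.range n,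
      ((k*n - (k * max a b + r) : ℕ) : ℝ)
        = ((k:ℝ)*(n:ℝ) - (k:ℝ) * ((max a b : ℕ):ℝ)) - (r:ℝ) := by
    intro a ha r hr b hb
    have han := Finset.mem_range.mp ha
    have hbn := Finset.mem_range.mp hb
    have hrk := Finset.mem_range.mp hr
    have hle : k * max a b + r ≤ k*n := by
      have h1 : max a b + 1 ≤ n := by omega
      have h2 := Nat.mul_le_mul_left k h1
      rw [Nat.mul_add, Nat.mul_one] at h2
      omega
    rw [Nat.cast_sub hle]
    push_cast
    ring
  rw [Nat.cast_sum, Finset.sum_congr rfl (fun a ha => (Nat.cast_sum _ _).trans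
    (Finset.sum_congr rfl (fun r hr => (Nat.cast_sum _ _).trans
      (Finset.sum_congr rfl (fun b hb => hcast a ha r hr b hb)))))]
  rw [Finset.sum_congr rfl (fun a (_ : a ∈ Finset.range n) => Finset.sum_comm)]
  rw [Finset.sum_congr rfl (fun a (_ : a ∈ Finset.range n) =>
    Finset.sum_congr rfl (fun b (_ : b ∈ Finset.range n) => by
      rw [Finset.sum_sub_distrib, Finset.sum_const, Finset.card_range, hR,
        nsmul_eq_mul]))]
  have expand : ∀ a ∈ Finset.range n,
      ∑ b ∈ Finset.range n, ((k:ℝ) * ((k:ℝ)*(n:ℝ) - (k:ℝ) * ((max a b : ℕ):ℝ))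
        - (k:ℝ)*((k:ℝ)-1)/2)
      = (n:ℝ) * ((k:ℝ) * ((k:ℝ)*(n:ℝ)) - (k:ℝ)*((k:ℝ)-1)/2)
        - (k:ℝ)^2 * ∑ b ∈ Finset.range n, ((max a b : ℕ):ℝ) := by
    intro a _
    rw [Finset.sum_sub_distrib, Finset.sum_const, Finset.card_range, nsmul_eq_mul]
    rw [Finset.sum_congr rfl (fun b (_ : b ∈ Finset.range n) =>
      mul_sub (k:ℝ) ((k:ℝ)*(n:ℝ)) ((k:ℝ) * ((max a b : ℕ):ℝ)))]
    rw [Finset.sum_sub_distrib, Finset.sum_const, Finset.card_range, nsmul_eq_mul,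
      ← Finset.mul_sum]
    ring_nf
    rw [← Finset.mul_sum]
    ring
  rw [Finset.sum_congr rfl expand]
  rw [Finset.sum_sub_distrib, Finset.sum_const, Finset.card_range, nsmul_eq_mul,
    ← Finset.mul_sum]
  have : ∑ a ∈ Finset.range n, ∑ b ∈ Finset.range n, ((max a b : ℕ):ℝ) = ((Mx n : ℕ):ℝ) := by
    rw [Mx]
    push_cast
    rfl
  rw [this, hM]
  ring

lemma F_eq (k n : ℕ) (hk : 0 < k) :
    ∑ i ∈ Finset.range (k*n), ∑ j ∈ Finset.range (k*n),
        (if i % k = j % k then k*n - max i j else 0)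
      = ∑ a ∈ Finset.range n, ∑ r ∈ Finset.range k, ∑ b ∈ Finset.range n,
          (k*n - (k * max a b + r)) := by
  rw [sum_range_mul_eq k n hk]
  apply Finset.sum_congr rfl; intro a _
  apply Finset.sum_congr rfl; intro r hr
  have hrk := Finset.mem_range.mp hr
  have hmod : ∀ c s : ℕ, s < k → (c*k+s) % k = s := fun c s hs => by
    rw [Nat.add_comm, Nat.add_mul_mod_self_right, Nat.mod_eq_of_lt hs]
  rw [Finset.sum_congr rfl (fun j (_ : j ∈ Finset.range (k*n)) => rfl),
    sum_range_mul_eq k n hk]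
  apply Finset.sum_congr rfl; intro b _
  calc ∑ s ∈ Finset.range k, (if (a*k+r) % k = (b*k+s) % k then k*n - max (a*k+r) (b*k+s) else 0)
      = ∑ s ∈ Finset.range k, (if r = s then k*n - max (a*k+r) (b*k+s) else 0) := by
        apply Finset.sum_congr rfl; intro s hs
        rw [hmod a r hrk, hmod b s (Finset.mem_range.mp hs)]
    _ = if r ∈ Finset.range k then k*n - max (a*k+r) (b*k+r) else 0 := Finset.sum_ite_eq _ r _
    _ = k*n - (k * max a b + r) := by
        rw [if_pos (Finset.mem_range.mpr hrk), max_affine]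

lemma kxSum_split (η : List Bool) (hη : IsPrimeWord η) (n : ℕ) :
    ∃ Ev : ℕ,
      kxSum (wpow η n)
        = (∑ a ∈ Finset.range n, ∑ r ∈ Finset.range η.length, ∑ b ∈ Finset.range n,
            (η.length*n - (η.length * max a b + r))) + Ev
      ∧ Ev ≤ (η.length*n) * ((η.length*n) * η.length) := by
  set k := η.length with hkdef
  have hk : 0 < k := List.length_pos_iff.mpr hη.1
  set N := k * n with hN
  set w := wpow η n with hw
  have hwl : w.length = N := by rw [hw, wpow_length]
  refine ⟨∑ i ∈ Finset.range N, ∑ j ∈ Finset.range N,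
    (if i % k = j % k then 0 else cpl (w.drop i) (w.drop j)), ?_, ?_⟩
  · rw [kxSum_eq_sum_cpl, hwl, ← F_eq k n hk, ← Finset.sum_add_distrib]
    apply Finset.sum_congr rfl; intro i hi
    rw [← Finset.sum_add_distrib]
    apply Finset.sum_congr rfl; intro j hj
    have hiN := Finset.mem_range.mp hi
    have hjN := Finset.mem_range.mp hj
    by_cases hc : i % k = j % k
    · rw [if_pos hc, if_pos hc, Nat.add_zero]
      rcases le_total i j with hij | hij
      · rw [cpl_drop_congruent η n hij (le_of_lt hjN) ((Nat.modEq_iff_dvd' hij).mp hc),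
          Nat.max_eq_right hij]
      · rw [cpl_comm, cpl_drop_congruent η n hij (le_of_lt hiN)
          ((Nat.modEq_iff_dvd' hij).mp hc.symm), Nat.max_eq_left hij]
    · rw [if_neg hc, if_neg hc, Nat.zero_add]
  · calc ∑ i ∈ Finset.range N, ∑ j ∈ Finset.range N,
        (if i % k = j % k then 0 else cpl (w.drop i) (w.drop j))
        ≤ ∑ i ∈ Finset.range N, ∑ j ∈ Finset.range N, k := by
          apply Finset.sum_le_sum; intro i hi
          apply Finset.sum_le_sum; intro j hj
          by_cases hc : i % k = j % k
          · simp [hc]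
          · rw [if_neg hc]
            exact le_of_lt (cpl_drop_noncong η hη n
              (le_of_lt (Finset.mem_range.mp hi)) (le_of_lt (Finset.mem_range.mp hj)) hc)
      _ = N * (N * k) := by simp [Finset.sum_const, Finset.card_range, Nat.mul_assoc]


end KXProof

open KXProof in
theorem kxSum_pow_tendsto (η : List Bool) (k : ℕ)
    (hη : IsPrimeWord η) (hk : η.length = k) (h1 : 1 ≤ k) :
    Filter.Tendsto (fun n => (kxSum (wpow η n) : ℝ) / (n : ℝ) ^ 3)
      atTop (nhds ((k : ℝ) ^ 2 / 3)) := by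
  have hk0 : 0 < k := h1
  set F : ℕ → ℕ := fun n => ∑ a ∈ Finset.range n, ∑ r ∈ Finset.range η.length,
    ∑ b ∈ Finset.range n, (η.length*n - (η.length * max a b + r)) with hF
  have hFr : ∀ n, ((F n : ℕ) : ℝ)
      = (k:ℝ)^2 * ((n:ℝ)*(n+1)*(2*n+1))/6 - (k:ℝ)*((k:ℝ)-1)*(n:ℝ)^2/2 := by
    intro n
    rw [hF]
    simp only [hk]
    exact F_real k n hk0
  set g : ℕ → ℝ := fun n => (F n : ℝ)/(n:ℝ)^3 with hg
  have h0 : Tendsto (fun n : ℕ => 1/(n:ℝ)) atTop (nhds 0) := tendsto_one_div_atTop_nhds_zero_nat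
  have hgl : Tendsto g atTop (nhds ((k:ℝ)^2/3)) := by
    have haux : Tendsto (fun n : ℕ => (k:ℝ)^2*((1+1/(n:ℝ))*(2+1/(n:ℝ)))/6
        - ((k:ℝ)*((k:ℝ)-1)/2)*(1/(n:ℝ))) atTop
        (nhds ((k:ℝ)^2*((1+0)*(2+0))/6 - ((k:ℝ)*((k:ℝ)-1)/2)*0)) := by
      apply Tendsto.sub
      · apply Tendsto.div_const
        apply Tendsto.const_mul
        exact (tendsto_const_nhds.add h0).mul (tendsto_const_nhds.add h0)
      · exact h0.const_mul _
    have hval : ((k:ℝ)^2*((1+0)*(2+0))/6 - ((k:ℝ)*((k:ℝ)-1)/2)*0) = (k:ℝ)^2/3 := by ring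
    rw [hval] at haux
    apply haux.congr'
    filter_upwards [eventually_ge_atTop 1] with n hn
    have hn0 : (n:ℝ) ≠ 0 := by positivity -- n ≥ 1
    rw [hg]
    simp only [hFr n]
    field_simp
  have hup : Tendsto (fun n => g n + (k:ℝ)^3 * (1/(n:ℝ))) atTop (nhds ((k:ℝ)^2/3)) := by
    have := hgl.add (h0.const_mul ((k:ℝ)^3))
    simpa using this
  apply tendsto_of_tendsto_of_tendsto_of_le_of_le' hgl hup
  · filter_upwards [eventually_ge_atTop 1] with n hn
    obtain ⟨Ev, hEq, _⟩ := kxSum_split η hη n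
    rw [hEq]
    have hsplit : ((F n + Ev : ℕ):ℝ)/(n:ℝ)^3 = g n + (Ev:ℝ)/(n:ℝ)^3 := by
      push_cast
      rw [add_div]
    rw [hsplit]
    have : (0:ℝ) ≤ (Ev:ℝ)/(n:ℝ)^3 := by positivity
    linarith
  · filter_upwards [eventually_ge_atTop 1] with n hn
    obtain ⟨Ev, hEq, hEb⟩ := kxSum_split η hη n
    rw [hEq]
    have hsplit : ((F n + Ev : ℕ):ℝ)/(n:ℝ)^3 = g n + (Ev:ℝ)/(n:ℝ)^3 := by
      push_cast
      rw [add_div]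
    rw [hsplit]
    have hn0 : (0:ℝ) < (n:ℝ) := by exact_mod_cast hn
    have hEb' : (Ev:ℝ) ≤ (k:ℝ)^3 * (n:ℝ)^2 := by
      rw [hk] at hEb
      have := (Nat.cast_le (α := ℝ)).mpr hEb
      push_cast at this
      nlinarith [this]
    have hdiv : (Ev:ℝ)/(n:ℝ)^3 ≤ (k:ℝ)^3 * (1/(n:ℝ)) := by
      rw [div_le_iff₀ (by positivity)]
      have : (k:ℝ)^3 * (1/(n:ℝ)) * (n:ℝ)^3 = (k:ℝ)^3 * (n:ℝ)^2 := by
        field_simp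
      rw [this]
      exact hEb'
    linarith
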